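/- Let φ:[0,∞)→[0,∞) satisfy (aInc)_p and (aDec)_q for some 1 < p ≤ q with constant L. Then the conjugate φ*(s) = sup_{t≥0}(st − φ(t)) satisfies (aInc)_{q'} and (aDec)_{p'}, where p' = p/(p−1) and q' = q/(q−1), with constants depending only on p, q, L. -/

import Mathlib

set_option maxHeartbeats 1000000


open Set

/-- If `φ` satisfies (aInc)_p and (aDec)_q with constant `L` and
`1 < p ≤ q`, then the conjugate `φ*(s) = sup_{t ≥ 0}(s t − φ(t))` satisfies
(aInc)_{q'} and (aDec)_{p'}, where `p' = p/(p−1)`, `q' = q/(q−1)`, with a constant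
depending only on `p, q, L`. -/
theorem stmt4 (p q L : ℝ) (hp : 1 < p) (hpq : p ≤ q) (hL : 1 ≤ L) :
    ∃ L' : ℝ, 1 ≤ L' ∧
      ∀ φ : ℝ → ℝ,
        (∀ t : ℝ, 0 ≤ t → 0 ≤ φ t) →
        (∀ s t : ℝ, 0 < s → s ≤ t → φ s / s ^ p ≤ L * (φ t / t ^ p)) →
        (∀ s t : ℝ, 0 < s → s ≤ t → φ t / t ^ q ≤ L * (φ s / s ^ q)) →
        ∀ φs : ℝ → ℝ,
          (∀ u : ℝ, φs u = ⨆ r : {r : ℝ // 0 ≤ r}, (u * (r : ℝ) - φ (r : ℝ))) →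
          (∀ s t : ℝ, 0 < s → s ≤ t →
            φs s / s ^ (q / (q - 1)) ≤ L' * (φs t / t ^ (q / (q - 1)))) ∧
          (∀ s t : ℝ, 0 < s → s ≤ t →
            φs t / t ^ (p / (p - 1)) ≤ L' * (φs s / s ^ (p / (p - 1)))) := by
  have hq : 1 < q := lt_of_lt_of_le hp hpq
  have hp1 : 0 < p - 1 := by linarith
  have hq1 : 0 < q - 1 := by linarith
  have hL0 : 0 < L := by linarith
  set p' : ℝ := p / (p - 1) with hp'def
  set q' : ℝ := q / (q - 1) with hq'def
  have hp'pos : 0 < p' := div_pos (by linarith) hp1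
  have hq'pos : 0 < q' := div_pos (by linarith) hq1
  have hp'1 : 1 ≤ p' := by rw [hp'def, le_div_iff₀ hp1]; linarith
  have hq'1 : 1 ≤ q' := by rw [hq'def, le_div_iff₀ hq1]; linarith
  have hp'mul : (p' - 1) * p = p' := by rw [hp'def]; field_simp; ring
  have hq'mul : (q' - 1) * q = q' := by rw [hq'def]; field_simp; ring
  have hLp' : (1:ℝ) ≤ L ^ p' := Real.one_le_rpow hL hp'pos.le
  have hLq' : (1:ℝ) ≤ L ^ q' := Real.one_le_rpow hL hq'pos.le
  refine ⟨L ^ p' + L ^ q', by linarith, ?_⟩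
  intro φ hφ0 hinc hdec φs hφs
  haveI : Nonempty {r : ℝ // 0 ≤ r} := ⟨⟨0, le_rfl⟩⟩
  rcases eq_or_lt_of_le (hφ0 1 zero_le_one) with hc | hc
  · -- degenerate case : φ 1 = 0, hence φ ≡ 0 on (0,∞) and φs ≡ 0 on (0,∞)
    have hφzero : ∀ r : ℝ, 1 ≤ r → φ r = 0 := by
      intro r hr
      have h1 := hdec 1 r one_pos hr
      rw [← hc] at h1
      simp only [Real.one_rpow, div_one, mul_zero, zero_div] at h1
      have hrq : 0 < r ^ q := Real.rpow_pos_of_pos (by linarith) q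
      have h2 : φ r ≤ 0 := by
        rcases div_nonpos_iff.mp h1 with ⟨_, h⟩ | ⟨h, _⟩
        · linarith
        · exact h
      linarith [hφ0 r (by linarith : (0:ℝ) ≤ r)]
    have hzero : ∀ u : ℝ, 0 < u → φs u = 0 := by
      intro u hu
      rw [hφs]
      apply Real.iSup_of_not_bddAbove
      rintro ⟨M, hM⟩
      set r : ℝ := max 1 ((M + 1) / u) with hrdef
      have hr1 : (1:ℝ) ≤ r := le_max_left _ _
      have hMr : u * r - φ r ≤ M := hM ⟨⟨r, by linarith⟩, rfl⟩
      rw [hφzero r hr1] at hMr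
      have : (M + 1) / u ≤ r := le_max_right _ _
      have : M + 1 ≤ u * r := by
        rw [div_le_iff₀ hu] at this; linarith [this]
      linarith
    constructor <;> intro s t hs hst <;>
      rw [hzero s hs, hzero t (lt_of_lt_of_le hs hst)] <;> simp
  · -- main case : c := φ 1 > 0
    set c : ℝ := φ 1 with hcdef
    have hBdd : ∀ u : ℝ, BddAbove (range fun r : {r : ℝ // 0 ≤ r} => u * (r:ℝ) - φ (r:ℝ)) := by
      intro u
      rcases le_or_gt u 0 with hu | hu
      · refine ⟨0, ?_⟩
        rintro x ⟨r, rfl⟩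
        have h1 := hφ0 r r.2
        have h2 : u * (r:ℝ) ≤ 0 := mul_nonpos_of_nonpos_of_nonneg hu r.2
        simp only []
        linarith
      · set R : ℝ := max 1 ((u * L / c) ^ (p - 1)⁻¹) with hRdef
        have hR1 : (1:ℝ) ≤ R := le_max_left _ _
        have hRp : u * L / c ≤ R ^ (p - 1) := by
          have h0 : 0 ≤ u * L / c := by positivity
          calc u * L / c = ((u * L / c) ^ (p - 1)⁻¹) ^ (p - 1) :=
                (Real.rpow_inv_rpow h0 (by linarith)).symm
            _ ≤ R ^ (p - 1) :=
                Real.rpow_le_rpow (Real.rpow_nonneg h0 _) (le_max_right _ _) hp1.le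
        refine ⟨u * R, ?_⟩
        rintro x ⟨r, rfl⟩
        simp only []
        rcases le_or_gt (r:ℝ) R with hr | hr
        · have h1 := hφ0 r r.2
          nlinarith [r.2]
        · have hr1 : (1:ℝ) ≤ (r:ℝ) := le_trans hR1 hr.le
          have hrpos : (0:ℝ) < (r:ℝ) := by linarith
          have h1 := hinc 1 r one_pos hr1
          rw [Real.one_rpow, div_one] at h1
          -- h1 : φ 1 ≤ L * (φ r / r ^ p)
          have hrp : (0:ℝ) < (r:ℝ) ^ p := Real.rpow_pos_of_pos hrpos p
          have h1' : c ≤ L * φ (r:ℝ) / (r:ℝ) ^ p := by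
            rw [mul_div_assoc]; exact hcdef ▸ h1
          have hφr : c * (r:ℝ) ^ p ≤ L * φ (r:ℝ) := (le_div_iff₀ hrp).mp h1'
          have hsplit : (r:ℝ) ^ p = (r:ℝ) ^ (p - 1) * r := by
            rw [← Real.rpow_add_one (ne_of_gt hrpos)]; ring_nf
          have hmono : R ^ (p - 1) ≤ (r:ℝ) ^ (p - 1) :=
            Real.rpow_le_rpow (by linarith) hr.le hp1.le
          -- u * r - φ r ≤ u * r - c/L * r^p ≤ 0 ≤ u * R
          have hkey : u * L / c ≤ (r:ℝ) ^ (p - 1) := le_trans hRp hmono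
          rw [div_le_iff₀ hc] at hkey
          -- hkey : u * L ≤ r^(p-1) * c
          have hur : u * (r:ℝ) * L ≤ L * φ (r:ℝ) := by
            have h3 : u * L * (r:ℝ) ≤ (r:ℝ) ^ (p - 1) * c * (r:ℝ) :=
              mul_le_mul_of_nonneg_right hkey r.2
            calc u * (r:ℝ) * L = u * L * (r:ℝ) := by ring
              _ ≤ (r:ℝ) ^ (p - 1) * c * (r:ℝ) := h3
              _ = c * ((r:ℝ) ^ (p - 1) * (r:ℝ)) := by ring
              _ = c * (r:ℝ) ^ p := by rw [← hsplit]
              _ ≤ L * φ (r:ℝ) := hφr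
          have hur2 : u * (r:ℝ) ≤ φ (r:ℝ) := by
            have := (mul_le_mul_iff_of_pos_right hL0).mp (by linarith [hur] : u * (r:ℝ) * L ≤ φ (r:ℝ) * L)
            linarith
          nlinarith
    have hmono : ∀ s t : ℝ, s ≤ t → φs s ≤ φs t := by
      intro s t hst
      rw [hφs, hφs]
      apply ciSup_le
      intro r
      have h1 : s * (r:ℝ) - φ r ≤ t * (r:ℝ) - φ r := by
        have := mul_le_mul_of_nonneg_right hst r.2
        linarith
      exact le_trans h1 (le_ciSup (hBdd t) r)
    have hnonneg : ∀ u : ℝ, 0 < u → 0 ≤ φs u := by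
      intro u hu
      set r0 : ℝ := min 1 ((u / (L * c)) ^ (p - 1)⁻¹) with hr0def
      have hucL : 0 < u / (L * c) := by positivity
      have hr0pos : 0 < r0 := lt_min one_pos (Real.rpow_pos_of_pos hucL _)
      have hr01 : r0 ≤ 1 := min_le_left _ _
      have h1 := hinc r0 1 hr0pos hr01
      rw [Real.one_rpow, div_one, ← hcdef] at h1
      have hr0p : (0:ℝ) < r0 ^ p := Real.rpow_pos_of_pos hr0pos p
      have h2 : φ r0 ≤ L * c * r0 ^ p := by
        rw [div_le_iff₀ hr0p] at h1
        nlinarith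
      have h3 : r0 ^ (p - 1) ≤ u / (L * c) := by
        calc r0 ^ (p - 1) ≤ ((u / (L * c)) ^ (p - 1)⁻¹) ^ (p - 1) :=
              Real.rpow_le_rpow hr0pos.le (min_le_right _ _) hp1.le
          _ = u / (L * c) := Real.rpow_inv_rpow hucL.le (by linarith)
      have hsplit : r0 ^ p = r0 ^ (p - 1) * r0 := by
        rw [← Real.rpow_add_one (ne_of_gt hr0pos)]; ring_nf
      have h4 : L * c * r0 ^ p ≤ u * r0 := by
        rw [hsplit]
        have h5 : L * c * (r0 ^ (p - 1)) ≤ L * c * (u / (L * c)) :=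
          mul_le_mul_of_nonneg_left h3 (by positivity)
        have h6 : L * c * (u / (L * c)) = u := by field_simp
        nlinarith [hr0pos]
      have h7 : 0 ≤ u * r0 - φ r0 := by linarith
      have h8 : u * r0 - φ r0 ≤ φs u := by
        rw [hφs]
        exact le_ciSup (hBdd u) ⟨r0, hr0pos.le⟩
      linarith
    -- Lemma B : upper scaling bound from (aInc)_p
    have hB : ∀ s a : ℝ, 0 < s → 1 ≤ a → φs (a * s) ≤ a ^ p' / L * φs (L * s) := by
      intro s a hs ha
      have ha0 : 0 < a := lt_of_lt_of_le one_pos ha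
      have hap' : (0:ℝ) < a ^ p' := Real.rpow_pos_of_pos ha0 _
      have hLs : 0 < L * s := by positivity
      have hRHS0 : 0 ≤ a ^ p' / L * φs (L * s) :=
        mul_nonneg (by positivity) (hnonneg _ hLs)
      rw [hφs]
      apply ciSup_le
      rintro ⟨r, hr⟩
      simp only []
      rcases eq_or_lt_of_le hr with hr0 | hr0
      · rw [← hr0, mul_zero, zero_sub]
        linarith [hφ0 0 le_rfl]
      · set ap : ℝ := a ^ (p' - 1) with hapdef
        have hap0 : 0 < ap := Real.rpow_pos_of_pos ha0 _
        have hap1 : 1 ≤ ap := Real.one_le_rpow ha (by linarith)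
        set ρ : ℝ := r / ap with hρdef
        have hρpos : 0 < ρ := div_pos hr0 hap0
        have hρr : ρ ≤ r := div_le_self hr0.le hap1
        have hrρ : r = ap * ρ := by rw [hρdef]; field_simp
        have happ : ap ^ p = a ^ p' := by
          rw [hapdef, ← Real.rpow_mul ha0.le, hp'mul]
        have h1 := hinc ρ r hρpos hρr
        have hρp : (0:ℝ) < ρ ^ p := Real.rpow_pos_of_pos hρpos p
        have hrp : (0:ℝ) < r ^ p := Real.rpow_pos_of_pos hr0 p
        have hrpρ : r ^ p = a ^ p' * ρ ^ p := by
          rw [hrρ, Real.mul_rpow hap0.le hρpos.le, happ]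
        have h1' : φ ρ ≤ L * φ r * ρ ^ p / r ^ p := by
          rw [div_le_iff₀ hρp] at h1
          calc φ ρ ≤ L * (φ r / r ^ p) * ρ ^ p := h1
            _ = L * φ r * ρ ^ p / r ^ p := by ring
        have h1'' : φ ρ ≤ L * φ r / a ^ p' := by
          rw [hrpρ] at h1'
          calc φ ρ ≤ L * φ r * ρ ^ p / (a ^ p' * ρ ^ p) := h1'
            _ = L * φ r / a ^ p' := by
                field_simp
        have h2 : φ ρ * a ^ p' ≤ L * φ r := by
          rw [← le_div_iff₀ hap']; exact h1''
        have h3 : L * s * ρ - φ ρ ≤ φs (L * s) := by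
          rw [hφs]; exact le_ciSup (hBdd _) ⟨ρ, hρpos.le⟩
        have haap : a * ap = a ^ p' := by
          have h4 := Real.rpow_add_one (ne_of_gt ha0) (p' - 1)
          rw [show p' - 1 + 1 = p' by ring] at h4
          rw [hapdef, h4]; ring
        calc a * s * r - φ r = a ^ p' * (s * ρ) - φ r := by
              rw [hrρ, ← haap]; ring
          _ ≤ a ^ p' * (s * ρ) - φ ρ * a ^ p' / L := by
              have h5 : φ ρ * a ^ p' / L ≤ φ r := by
                rw [div_le_iff₀ hL0]; linarith [h2]
              linarith
          _ = a ^ p' / L * (L * s * ρ - φ ρ) := by field_simp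
          _ ≤ a ^ p' / L * φs (L * s) :=
              mul_le_mul_of_nonneg_left h3 (by positivity)
    -- Lemma A : lower scaling bound from (aDec)_q
    have hA : ∀ s a : ℝ, 0 < s → 1 ≤ a → a ^ q' * L * φs (s / L) ≤ φs (a * s) := by
      intro s a hs ha
      have ha0 : 0 < a := lt_of_lt_of_le one_pos ha
      have haq' : (0:ℝ) < a ^ q' := Real.rpow_pos_of_pos ha0 _
      have has : 0 < a * s := by positivity
      have hφas : 0 ≤ φs (a * s) := hnonneg _ has
      have key : φs (s / L) ≤ φs (a * s) / (a ^ q' * L) := by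
        rw [hφs]
        apply ciSup_le
        rintro ⟨ρ, hρ⟩
        simp only []
        rcases eq_or_lt_of_le hρ with hρ0 | hρ0
        · rw [← hρ0, mul_zero, zero_sub]
          have := hφ0 0 le_rfl
          have : (0:ℝ) ≤ φs (a * s) / (a ^ q' * L) := by positivity
          linarith [hφ0 0 le_rfl]
        · set aq : ℝ := a ^ (q' - 1) with haqdef
          have haq0 : 0 < aq := Real.rpow_pos_of_pos ha0 _
          have haq1 : 1 ≤ aq := Real.one_le_rpow ha (by linarith)
          set r : ℝ := aq * ρ with hrdef
          have hrpos : 0 < r := by positivity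
          have hρr : ρ ≤ r := le_mul_of_one_le_left hρ0.le haq1
          have haqq : aq ^ q = a ^ q' := by
            rw [haqdef, ← Real.rpow_mul ha0.le, hq'mul]
          have h1 := hdec ρ r hρ0 hρr
          have hρq : (0:ℝ) < ρ ^ q := Real.rpow_pos_of_pos hρ0 q
          have hrq : (0:ℝ) < r ^ q := Real.rpow_pos_of_pos hrpos q
          have hrqρ : r ^ q = a ^ q' * ρ ^ q := by
            rw [hrdef, Real.mul_rpow haq0.le hρ0.le, haqq]
          have h2 : φ r ≤ L * φ ρ * a ^ q' := by
            rw [div_le_iff₀ hrq] at h1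
            calc φ r ≤ L * (φ ρ / ρ ^ q) * r ^ q := h1
              _ = L * (φ ρ / ρ ^ q) * (a ^ q' * ρ ^ q) := by rw [hrqρ]
              _ = L * φ ρ * a ^ q' * (ρ ^ q / ρ ^ q) := by ring
              _ = L * φ ρ * a ^ q' := by rw [div_self (ne_of_gt hρq), mul_one]
          have h3 : a * s * r - φ r ≤ φs (a * s) := by
            rw [hφs]; exact le_ciSup (hBdd _) ⟨r, hrpos.le⟩
          have haar : a * s * r = a ^ q' * (s * ρ) := by
            have h4 := Real.rpow_add_one (ne_of_gt ha0) (q' - 1)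
            rw [show q' - 1 + 1 = q' by ring] at h4
            rw [hrdef, haqdef, h4]; ring
          have h5 : a ^ q' * (s * ρ) - L * φ ρ * a ^ q' ≤ φs (a * s) := by
            rw [← haar]; linarith
          rw [le_div_iff₀ (by positivity : (0:ℝ) < a ^ q' * L)]
          calc (s / L * ρ - φ ρ) * (a ^ q' * L)
              = a ^ q' * (s * ρ) * (L / L) - L * φ ρ * a ^ q' := by ring
            _ = a ^ q' * (s * ρ) - L * φ ρ * a ^ q' := by
                rw [div_self (ne_of_gt hL0), mul_one]
            _ ≤ φs (a * s) := h5
      calc a ^ q' * L * φs (s / L) ≤ a ^ q' * L * (φs (a * s) / (a ^ q' * L)) :=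
            mul_le_mul_of_nonneg_left key (by positivity)
        _ = φs (a * s) := by field_simp
    refine ⟨?_, ?_⟩
    · -- (aInc)_{q'} for φs
      intro s t hs hst
      have ht : 0 < t := lt_of_lt_of_le hs hst
      have hsq : (0:ℝ) < s ^ q' := Real.rpow_pos_of_pos hs _
      have htq : (0:ℝ) < t ^ q' := Real.rpow_pos_of_pos ht _
      have hXs : 0 ≤ φs s := hnonneg s hs
      have hXt : 0 ≤ φs t := hnonneg t ht
      rw [div_le_iff₀ hsq,
        show (L ^ p' + L ^ q') * (φs t / t ^ q') * s ^ q'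
            = (L ^ p' + L ^ q') * φs t * s ^ q' / t ^ q' by ring,
        le_div_iff₀ htq]
      -- goal : φs s * t ^ q' ≤ (L^p' + L^q') * φs t * s^q'
      rcases le_or_gt (L * s) t with hLst | hLst
      · have ha : 1 ≤ t / (L * s) := (one_le_div (by positivity)).mpr hLst
        have h1 := hA (L * s) (t / (L * s)) (by positivity) ha
        rw [show L * s / L = s by field_simp,
          show t / (L * s) * (L * s) = t by field_simp] at h1
        have hpow : (t / (L * s)) ^ q' = t ^ q' / (L ^ q' * s ^ q') := by
          rw [Real.div_rpow ht.le (by positivity), Real.mul_rpow hL0.le hs.le]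
        rw [hpow] at h1
        have hKS : (0:ℝ) < L ^ q' * s ^ q' := by positivity
        have h2 : t ^ q' * L * φs s ≤ φs t * (L ^ q' * s ^ q') := by
          have h2a := mul_le_mul_of_nonneg_right h1 hKS.le
          calc t ^ q' * L * φs s
              = t ^ q' / (L ^ q' * s ^ q') * L * φs s * (L ^ q' * s ^ q') := by
                field_simp
            _ ≤ φs t * (L ^ q' * s ^ q') := h2a
        nlinarith [h2, mul_nonneg hXs htq.le, mul_nonneg hXt hsq.le, hLp', hL]
      · have hm := hmono s t hst
        have hpow : t ^ q' ≤ L ^ q' * s ^ q' := by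
          calc t ^ q' ≤ (L * s) ^ q' := Real.rpow_le_rpow ht.le hLst.le hq'pos.le
            _ = L ^ q' * s ^ q' := Real.mul_rpow hL0.le hs.le
        nlinarith [hpow, hm, hXs, hXt, hsq, mul_nonneg hXt hsq.le,
          Real.rpow_pos_of_pos hL0 q', hLp']
    · -- (aDec)_{p'} for φs
      intro s t hs hst
      have ht : 0 < t := lt_of_lt_of_le hs hst
      have hsp : (0:ℝ) < s ^ p' := Real.rpow_pos_of_pos hs _
      have htp : (0:ℝ) < t ^ p' := Real.rpow_pos_of_pos ht _
      have hXs : 0 ≤ φs s := hnonneg s hs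
      have hXt : 0 ≤ φs t := hnonneg t ht
      have ha : 1 ≤ t * L / s := by
        rw [le_div_iff₀ hs]; nlinarith
      have h1 := hB (s / L) (t * L / s) (by positivity) ha
      rw [show t * L / s * (s / L) = t by field_simp,
        show L * (s / L) = s by field_simp] at h1
      have hpow : (t * L / s) ^ p' = t ^ p' * L ^ p' / s ^ p' := by
        rw [Real.div_rpow (by positivity) hs.le, Real.mul_rpow ht.le hL0.le]
      rw [hpow] at h1
      -- h1 : φs t ≤ t^p' * L^p' / s^p' / L * φs s
      rw [div_le_iff₀ htp,
        show (L ^ p' + L ^ q') * (φs s / s ^ p') * t ^ p'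
            = (L ^ p' + L ^ q') * φs s * t ^ p' / s ^ p' by ring,
        le_div_iff₀ hsp]
      -- goal : φs t * s ^ p' ≤ (L^p'+L^q') * φs s * t^p'
      have h2 : φs t * s ^ p' ≤ t ^ p' * L ^ p' / L * φs s := by
        have h2a := mul_le_mul_of_nonneg_right h1 hsp.le
        calc φs t * s ^ p' ≤ t ^ p' * L ^ p' / s ^ p' / L * φs s * s ^ p' := h2a
          _ = t ^ p' * L ^ p' / L * φs s * (s ^ p' / s ^ p') := by ring
          _ = t ^ p' * L ^ p' / L * φs s := by
              rw [div_self (ne_of_gt hsp), mul_one]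
      have h2L : L * (φs t * s ^ p') ≤ t ^ p' * L ^ p' * φs s := by
        have h4 := mul_le_mul_of_nonneg_left h2 hL0.le
        calc L * (φs t * s ^ p') ≤ L * (t ^ p' * L ^ p' / L * φs s) := h4
          _ = t ^ p' * L ^ p' * φs s * (L / L) := by ring
          _ = t ^ p' * L ^ p' * φs s := by rw [div_self (ne_of_gt hL0), mul_one]
      nlinarith [h2L, mul_nonneg hXt hsp.le,
        mul_nonneg (mul_nonneg (Real.rpow_pos_of_pos hL0 q').le hXs) htp.le, hL]
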